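/- arXiv:math/0402076 — 2 statements merged into one kernel-verified Lean document; each statement's English description precedes it below -/
import Mathlib

section
/- Let V be an n-dimensional real vector space with nondegenerate symmetric bilinear form g, J an endomorphism with g-transpose J̄, and U an endomorphism satisfying g(Ux,y) = -g(x,Uy) for all x,y (g-skew-symmetric). Suppose J is nondegenerate with n distinct real eigenvalues, and X satisfies JX = λX with X ≠ 0. Then there exists Y ∈ V such that J̄Y = λY - UX. -/
/-- With `J` invertible, having `n = dim V` distinct real
eigenvalues, `Jb` its `g`-transpose and `U` `g`-skew, if `J X = lam • X` with
`X ≠ 0` then there is `Y` with `Jb Y = lam • Y - U X`. -/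
theorem stmt2 {V : Type*} [AddCommGroup V] [Module ℝ V] [FiniteDimensional ℝ V]
    {n : ℕ} (hdim : Module.finrank ℝ V = n)
    (g : LinearMap.BilinForm ℝ V) (hsym : g.IsSymm) (hnd : g.Nondegenerate)
    (J Jb U : V →ₗ[ℝ] V)
    (hJinv : Function.Bijective J)
    (htr : ∀ x y, g (J x) y = g x (Jb y))
    (hU : ∀ x y, g (U x) y = - g x (U y))
    (lams : Fin n → ℝ) (hinj : Function.Injective lams)
    (heig : ∀ i, Module.End.HasEigenvalue J (lams i))
    (X : V) (hX : X ≠ 0) (lam : ℝ) (hJX : J X = lam • X) :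
    ∃ Y : V, Jb Y = lam • Y - U X := by
  classical
  have hrefl : g.IsRefl := hsym.isRefl
  choose v hv using fun i => (heig i).exists_hasEigenvector
  set A : V →ₗ[ℝ] V := J - lam • LinearMap.id with hA
  set B : V →ₗ[ℝ] V := Jb - lam • LinearMap.id with hB
  have hAB : ∀ x y, g (A x) y = g x (B y) := by
    intro x y
    simp only [hA, hB, LinearMap.sub_apply, LinearMap.smul_apply, LinearMap.id_apply,
      map_sub, map_smul, LinearMap.sub_apply, LinearMap.smul_apply, smul_eq_mul]
    rw [htr x y]
  -- X lies in the kernel of A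
  have hXker : X ∈ LinearMap.ker A := by
    simp [hA, hJX]
  have hspanle : (ℝ ∙ X) ≤ LinearMap.ker A := by
    rw [Submodule.span_singleton_le_iff_mem]; exact hXker
  have hspan1 : Module.finrank ℝ (ℝ ∙ X) = 1 := finrank_span_singleton hX
  -- eigenvectors are linearly independent
  have hli : LinearIndependent ℝ v :=
    Module.End.eigenvectors_linearIndependent' J lams hinj v hv
  -- restricted family of eigenvectors with eigenvalue ≠ lam
  have hliS : LinearIndependent ℝ (fun i : {i : Fin n // lams i ≠ lam} => v i.1) :=
    hli.comp _ Subtype.val_injective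
  have hcardS : n - 1 ≤ Fintype.card {i : Fin n // lams i ≠ lam} := by
    have h1 : Fintype.card {i : Fin n // lams i = lam} ≤ 1 := by
      rw [Fintype.card_le_one_iff_subsingleton]
      constructor
      rintro ⟨i, hi⟩ ⟨j, hj⟩
      have : i = j := hinj (hi.trans hj.symm)
      simp [this]
    have h2 : Fintype.card {i : Fin n // lams i ≠ lam} =
        Fintype.card (Fin n) - Fintype.card {i : Fin n // lams i = lam} :=
      Fintype.card_subtype_compl _
    rw [h2, Fintype.card_fin]
    omega
  -- these eigenvectors lie in the range of A
  have hvrange : ∀ i : {i : Fin n // lams i ≠ lam}, v i.1 ∈ LinearMap.range A := by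
    rintro ⟨i, hi⟩
    refine ⟨(lams i - lam)⁻¹ • v i, ?_⟩
    have hAv : A (v i) = (lams i - lam) • v i := by
      have := (hv i).apply_eq_smul
      simp [hA, this, sub_smul]
    rw [map_smul, hAv, smul_smul, inv_mul_cancel₀ (sub_ne_zero.mpr hi), one_smul]
  have hrangeA : n - 1 ≤ Module.finrank ℝ (LinearMap.range A) := by
    have hle : Submodule.span ℝ (Set.range fun i : {i : Fin n // lams i ≠ lam} => v i.1)
        ≤ LinearMap.range A := by
      rw [Submodule.span_le]
      rintro - ⟨i, rfl⟩
      exact hvrange i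
    have := finrank_span_eq_card hliS
    calc n - 1 ≤ Fintype.card {i : Fin n // lams i ≠ lam} := hcardS
      _ = Module.finrank ℝ (Submodule.span ℝ
          (Set.range fun i : {i : Fin n // lams i ≠ lam} => v i.1)) := this.symm
      _ ≤ Module.finrank ℝ (LinearMap.range A) := Submodule.finrank_mono hle
  have hrn : Module.finrank ℝ (LinearMap.range A) + Module.finrank ℝ (LinearMap.ker A) = n := by
    rw [LinearMap.finrank_range_add_finrank_ker A, hdim]
  have hker1le : 1 ≤ Module.finrank ℝ (LinearMap.ker A) := by
    calc 1 = Module.finrank ℝ (ℝ ∙ X) := hspan1.symm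
      _ ≤ _ := Submodule.finrank_mono hspanle
  have hkerA : Module.finrank ℝ (LinearMap.ker A) = 1 := by
    have hr : Module.finrank ℝ (LinearMap.range A) ≤ n - 1 + 0 := by omega
    omega
  have hrangeA' : Module.finrank ℝ (LinearMap.range A) = n - 1 := by omega
  -- hence ker A = span X
  have hkereq : LinearMap.ker A = (ℝ ∙ X) := by
    refine (Submodule.eq_of_le_of_finrank_le hspanle ?_).symm
    rw [hspan1, hkerA]
  -- ker B ≤ orthogonal of range A
  have hkerB : Module.finrank ℝ (LinearMap.ker B) ≤ 1 := by
    have hle : LinearMap.ker B ≤ g.orthogonal (LinearMap.range A) := by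
      intro y hy
      rintro - ⟨x, rfl⟩
      rw [hAB x y, LinearMap.mem_ker.mp hy, map_zero]
    calc Module.finrank ℝ (LinearMap.ker B)
        ≤ Module.finrank ℝ (g.orthogonal (LinearMap.range A)) := Submodule.finrank_mono hle
      _ = Module.finrank ℝ V - Module.finrank ℝ (LinearMap.range A) :=
          g.finrank_orthogonal hnd _
      _ ≤ 1 := by rw [hdim, hrangeA']; omega
  -- range B = orthogonal of ker A
  have hrangeB : LinearMap.range B = g.orthogonal (LinearMap.ker A) := by
    have hle : LinearMap.range B ≤ g.orthogonal (LinearMap.ker A) := by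
      rintro - ⟨y, rfl⟩ x hx
      rw [← hAB x y, LinearMap.mem_ker.mp hx, map_zero,
        LinearMap.zero_apply]
    refine Submodule.eq_of_le_of_finrank_le hle ?_
    have h1 : Module.finrank ℝ (g.orthogonal (LinearMap.ker A)) =
        Module.finrank ℝ V - Module.finrank ℝ (LinearMap.ker A) :=
      g.finrank_orthogonal hnd _
    have h2 : Module.finrank ℝ (LinearMap.range B) + Module.finrank ℝ (LinearMap.ker B) = n := by
      rw [LinearMap.finrank_range_add_finrank_ker B, hdim]
    rw [h1, hdim, hkerA]
    omega
  -- g X (U X) = 0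
  have hgXUX : g X (U X) = 0 := by
    have h1 : g (U X) X = - g X (U X) := hU X X
    have h2 : g (U X) X = g X (U X) := by
      have := hsym.eq (U X) X
      simpa using this
    linarith [h1, h2.symm]
  -- -U X is in the orthogonal of ker A
  have hUXorth : -U X ∈ g.orthogonal (LinearMap.ker A) := by
    intro x hx
    rw [hkereq] at hx
    obtain ⟨c, rfl⟩ := Submodule.mem_span_singleton.mp hx
    rw [map_neg, g.map_smul₂]
    simp [hgXUX]
  rw [← hrangeB] at hUXorth
  obtain ⟨Y, hY⟩ := hUXorth
  refine ⟨Y, ?_⟩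
  have : Jb Y - lam • Y = -U X := by simpa [hB, sub_eq_iff_eq_add] using hY
  rw [sub_eq_iff_eq_add] at this
  rw [this]
  abel
end

section
/- Let J be an endomorphism of an n-dimensional real vector space that is diagonalizable with n distinct eigenvalues λ₁,...,λₙ, with eigenvectors X₁,...,Xₙ; let J̄ be another endomorphism with the same n distinct eigenvalues, with eigenvectors Z₁,...,Zₙ; and let U be any linear map such that for each i there exists Yᵢ with J̄Yᵢ = λᵢYᵢ - UXᵢ. Then the 2n vectors {(0,Zᵢ)} ∪ {(Xᵢ,Yᵢ)} form a basis of V × V consisting of eigenvectors of R(x,y) = (Jx, Ux + J̄y), so R is diagonalizable with eigenvalues λ₁,...,λₙ each of multiplicity 2. -/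
/-- If `J` has eigenbasis `X i` with pairwise distinct eigenvalues
`lam i`, `Jb` has eigenbasis `Z i` for the same eigenvalues, and
`Jb (Y i) = lam i • Y i - U (X i)`, then the `2n` vectors `(0, Z i)` and
`(X i, Y i)` form a basis of `V × V` consisting of eigenvectors of
`R (x,y) = (J x, U x + Jb y)`; in particular `R` is diagonalizable with each
`lam i` of multiplicity 2. -/
theorem stmt19 {V : Type*} [AddCommGroup V] [Module ℝ V] [FiniteDimensional ℝ V]
    {n : ℕ} (hdim : Module.finrank ℝ V = n)
    (J Jb U : V →ₗ[ℝ] V) (lam : Fin n → ℝ) (hinj : Function.Injective lam)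
    (X : Module.Basis (Fin n) ℝ V) (hX : ∀ i, J (X i) = lam i • X i)
    (Z : Module.Basis (Fin n) ℝ V) (hZ : ∀ i, Jb (Z i) = lam i • Z i)
    (Y : Fin n → V) (hY : ∀ i, Jb (Y i) = lam i • Y i - U (X i))
    (R : V × V →ₗ[ℝ] V × V)
    (hR : ∀ x y : V, R (x, y) = (J x, U x + Jb y)) :
    let b : (Fin n ⊕ Fin n) → V × V :=
      fun i => Sum.elim (fun i => ((0 : V), Z i)) (fun i => (X i, Y i)) i
    LinearIndependent ℝ b ∧ Submodule.span ℝ (Set.range b) = ⊤ ∧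
      (∀ i, R (0, Z i) = lam i • ((0 : V), Z i)) ∧
      (∀ i, R (X i, Y i) = lam i • (X i, Y i)) := by
  intro b
  set L : V →ₗ[ℝ] V := X.constr ℝ Y with hL
  set e : (V × V) ≃ₗ[ℝ] (V × V) :=
    LinearEquiv.ofLinear
      ((LinearMap.fst ℝ V V).prod (L ∘ₗ LinearMap.fst ℝ V V + LinearMap.snd ℝ V V))
      ((LinearMap.fst ℝ V V).prod (LinearMap.snd ℝ V V - L ∘ₗ LinearMap.fst ℝ V V))
      (by ext x <;> simp) (by ext x <;> simp) with he
  set B : Module.Basis (Fin n ⊕ Fin n) ℝ (V × V) :=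
    ((X.prod Z).map e).reindex (Equiv.sumComm (Fin n) (Fin n)) with hB
  have hbB : b = ⇑B := by
    funext i
    cases i with
    | inl i =>
        simp [hB, b, Module.Basis.prod_apply, he]
    | inr i =>
        simp [hB, b, Module.Basis.prod_apply, he, hL, Module.Basis.constr_basis]
  refine ⟨?_, ?_, ?_, ?_⟩
  · rw [hbB]; exact B.linearIndependent
  · rw [hbB]; exact B.span_eq
  · intro i
    rw [hR]
    simp [hZ i, Prod.smul_def]
  · intro i
    rw [hR, hX i, hY i]
    simp [Prod.smul_def]
end
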